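/- Let a : [0,∞) → (0,∞) be a C² solution of the scale-factor equation ä(t) + (4π/3) a(t)^{−2} = 0. Define F(t, x, v) = π^{−3/2} exp(−a(t)² |v − (ȧ(t)/a(t)) x|²), ρ(t, x) = a(t)^{−3}, and φ(t, x) = (2π/3) a(t)^{−3} |x|² for t ≥ 0 and x, v ∈ ℝ³. Then: (i) ∫_{ℝ³} F(t, x, v) dv = ρ(t, x); (ii) Δ_x φ(t, x) = 4π ρ(t, x); (iii) F(t, x, u′) F(t, x, v′) = F(t, x, u) F(t, x, v) for all u, v ∈ ℝ³ and ω ∈ 𝕊², so the Boltzmann collision integral ∫_{ℝ³×𝕊²} |u − v|^γ B(ω) ( F(t,x,u′)F(t,x,v′) − F(t,x,u)F(t,x,v) ) dω du vanishes identically; and (iv) ∂_t F + v·∇_x F − ∇_x φ·∇_v F = 0. Hence (F, ρ, φ) is an exact solution of the Vlasov–Poisson–Boltzmann system. -/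

import Mathlib

open MeasureTheory Real Set

noncomputable section

abbrev R3 := EuclideanSpace ℝ (Fin 3)

abbrev Sphere2 := Metric.sphere (0 : R3) 1

/-- The surface measure dω on 𝕊². -/
def sphMeasure : Measure Sphere2 := (volume : Measure R3).toSphere

/-- Post-collision velocity u′ = u + ((v − u)·ω)ω. -/
def uPost (u v : R3) (ω : Sphere2) : R3 := u + (inner ℝ (v - u) (ω : R3) : ℝ) • (ω : R3)

/-- Post-collision velocity v′ = v + ((u − v)·ω)ω. -/
def vPost (u v : R3) (ω : Sphere2) : R3 := v + (inner ℝ (u - v) (ω : R3) : ℝ) • (ω : R3)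

/-- First-order partial derivative in the i-th coordinate direction. -/
def pd (i : Fin 3) (g : R3 → ℝ) : R3 → ℝ :=
  fun x => fderiv ℝ g x (EuclideanSpace.single i 1)

lemma norm_sq_coord (z : R3) : ‖z‖ ^ 2 = ∑ i, z i ^ 2 := by
  rw [EuclideanSpace.norm_eq, Real.sq_sqrt (by positivity)]
  simp [sq_abs]

lemma normsub (v x : R3) (q : ℝ) : ‖v - q • x‖ ^ 2 = ∑ j, (v j - q * x j) ^ 2 := by
  rw [norm_sq_coord]
  exact Finset.sum_congr rfl fun j _ => by simp [PiLp.sub_apply, PiLp.smul_apply, smul_eq_mul]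

lemma pd_gauss (K A2 c : ℝ) (v x : R3) (i : Fin 3) :
    pd i (fun y => K * Real.exp (-A2 * ‖v - c • y‖ ^ 2)) x
      = K * Real.exp (-A2 * ‖v - c • x‖ ^ 2) * (-A2) * (2 * (v i - c * x i) * (-c)) := by
  have hfun : (fun y : R3 => K * Real.exp (-A2 * ‖v - c • y‖ ^ 2))
      = fun y : R3 => K * Real.exp (-A2 * ∑ j, (v j - c * y j) * (v j - c * y j)) := by
    funext y; rw [normsub]; simp only [pow_two]
  have hterm : ∀ j : Fin 3, HasFDerivAt (fun y : R3 => v j - c * y j)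
      (-(c • (EuclideanSpace.proj j : R3 →L[ℝ] ℝ))) x :=
    fun j => ((EuclideanSpace.proj (𝕜 := ℝ) j).hasFDerivAt.const_mul c).const_sub (v j)
  have h := (((HasFDerivAt.fun_sum (fun j (_ : j ∈ Finset.univ) =>
      (hterm j).fun_mul (hterm j))).const_mul (-A2)).exp).const_mul K
  rw [pd, hfun, h.fderiv]
  simp only [ContinuousLinearMap.smul_apply, ContinuousLinearMap.sum_apply,
    ContinuousLinearMap.add_apply, ContinuousLinearMap.neg_apply, PiLp.proj_apply,
    EuclideanSpace.single_apply, smul_eq_mul]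
  rw [Finset.sum_congr rfl (fun j (_ : j ∈ Finset.univ) =>
    show (v j - c * x j) * -(c * if j = i then (1:ℝ) else 0)
        + (v j - c * x j) * -(c * if j = i then (1:ℝ) else 0)
      = (if j = i then -(2 * (v j - c * x j) * c) else 0) from by split_ifs with hh <;> ring)]
  rw [Finset.sum_ite_eq' Finset.univ i (fun j => -(2 * (v j - c * x j) * c))]
  simp only [Finset.mem_univ, if_true]
  rw [normsub v x c]
  simp only [pow_two]
  ring

lemma pd_gauss' (K A2 : ℝ) (b v : R3) (i : Fin 3) :
    pd i (fun w => K * Real.exp (-A2 * ‖w - b‖ ^ 2)) v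
      = K * Real.exp (-A2 * ‖v - b‖ ^ 2) * (-A2) * (2 * (v i - b i)) := by
  have hns : ∀ w : R3, ‖w - b‖ ^ 2 = ∑ j, (w j - b j) * (w j - b j) := by
    intro w; rw [norm_sq_coord]
    exact Finset.sum_congr rfl fun j _ => by simp [PiLp.sub_apply]; ring
  have hfun : (fun w : R3 => K * Real.exp (-A2 * ‖w - b‖ ^ 2))
      = fun w : R3 => K * Real.exp (-A2 * ∑ j, (w j - b j) * (w j - b j)) := by
    funext w; rw [hns]
  have hterm : ∀ j : Fin 3, HasFDerivAt (fun w : R3 => w j - b j)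
      ((EuclideanSpace.proj j : R3 →L[ℝ] ℝ)) v :=
    fun j => (EuclideanSpace.proj (𝕜 := ℝ) j).hasFDerivAt.sub_const (b j)
  have h := (((HasFDerivAt.fun_sum (fun j (_ : j ∈ Finset.univ) =>
      (hterm j).fun_mul (hterm j))).const_mul (-A2)).exp).const_mul K
  rw [pd, hfun, h.fderiv]
  simp only [ContinuousLinearMap.smul_apply, ContinuousLinearMap.sum_apply,
    ContinuousLinearMap.add_apply, PiLp.proj_apply, EuclideanSpace.single_apply, smul_eq_mul]
  rw [Finset.sum_congr rfl (fun j (_ : j ∈ Finset.univ) =>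
    show (v j - b j) * (if j = i then (1:ℝ) else 0) + (v j - b j) * (if j = i then (1:ℝ) else 0)
      = (if j = i then 2 * (v j - b j) else 0) from by split_ifs with hh <;> ring)]
  rw [Finset.sum_ite_eq' Finset.univ i (fun j => 2 * (v j - b j))]
  simp only [Finset.mem_univ, if_true]
  rw [hns v]
  ring

lemma pd_phi (k : ℝ) (x : R3) (i : Fin 3) :
    pd i (fun y : R3 => k * ‖y‖ ^ 2) x = k * (2 * x i) := by
  have hfun : (fun y : R3 => k * ‖y‖ ^ 2) = fun y : R3 => k * ∑ j, y j * y j := by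
    funext y; rw [norm_sq_coord]; simp only [pow_two]
  have hterm : ∀ j : Fin 3, HasFDerivAt (fun y : R3 => y j)
      ((EuclideanSpace.proj j : R3 →L[ℝ] ℝ)) x :=
    fun j => (EuclideanSpace.proj (𝕜 := ℝ) j).hasFDerivAt
  have h := (HasFDerivAt.fun_sum (fun j (_ : j ∈ Finset.univ) =>
      (hterm j).fun_mul (hterm j))).const_mul k
  rw [pd, hfun, h.fderiv]
  simp only [ContinuousLinearMap.smul_apply, ContinuousLinearMap.sum_apply,
    ContinuousLinearMap.add_apply, PiLp.proj_apply, EuclideanSpace.single_apply, smul_eq_mul]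
  rw [Finset.sum_congr rfl (fun j (_ : j ∈ Finset.univ) =>
    show x j * (if j = i then (1:ℝ) else 0) + x j * (if j = i then (1:ℝ) else 0)
      = (if j = i then 2 * x j else 0) from by split_ifs with hh <;> ring)]
  rw [Finset.sum_ite_eq' Finset.univ i (fun j => 2 * x j)]
  simp only [Finset.mem_univ, if_true]

lemma pd_lin (k : ℝ) (x : R3) (i : Fin 3) :
    pd i (fun y : R3 => k * (2 * y i)) x = k * 2 := by
  have h : HasFDerivAt (fun y : R3 => k * (2 * y i))
      (k • (2:ℝ) • (EuclideanSpace.proj i : R3 →L[ℝ] ℝ)) x :=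
    (((EuclideanSpace.proj (𝕜 := ℝ) i).hasFDerivAt (x := x)).const_mul 2).const_mul k
  rw [pd, h.fderiv]
  simp [EuclideanSpace.single_apply]

lemma collision_id (u v w ω : R3) (hω : ‖ω‖ = 1) :
    ‖(u + (inner ℝ (v - u) ω : ℝ) • ω) - w‖ ^ 2 + ‖(v + (inner ℝ (u - v) ω : ℝ) • ω) - w‖ ^ 2
      = ‖u - w‖ ^ 2 + ‖v - w‖ ^ 2 := by
  set s : ℝ := inner ℝ (v - u) ω with hs
  have hsu : (inner ℝ (u - v) ω : ℝ) = -s := by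
    rw [hs, ← inner_neg_left]; congr 1; abel
  have h1 : u + s • ω - w = (u - w) + s • ω := by abel
  have h2 : v + (inner ℝ (u - v) ω : ℝ) • ω - w = (v - w) + (-s) • ω := by rw [hsu]; abel
  rw [h1, h2, norm_add_sq_real, norm_add_sq_real]
  have hnsm : ∀ r : ℝ, ‖r • ω‖ ^ 2 = r ^ 2 := by
    intro r; rw [norm_smul, hω, mul_one, Real.norm_eq_abs, sq_abs]
  rw [hnsm, hnsm, real_inner_smul_right, real_inner_smul_right]
  have e1 : (inner ℝ (u - w) ω : ℝ) = inner ℝ u ω - inner ℝ w ω := inner_sub_left u w ω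
  have e2 : (inner ℝ (v - w) ω : ℝ) = inner ℝ v ω - inner ℝ w ω := inner_sub_left v w ω
  have e3 : s = inner ℝ v ω - inner ℝ u ω := by rw [hs]; exact inner_sub_left v u ω
  rw [e1, e2]
  linear_combination (2 * s) * e3

lemma time_deriv (K : ℝ) (a a' : ℝ → ℝ) (t A'' : ℝ) (hA : HasDerivAt a (a' t) t)
    (hA' : HasDerivAt a' A'' t) (h0 : a t ≠ 0) (x v : R3) :
    HasDerivAt (fun s => K * Real.exp (-(a s) ^ 2 * ‖v - (a' s / a s) • x‖ ^ 2))
      (K * Real.exp (-(a t) ^ 2 * ‖v - (a' t / a t) • x‖ ^ 2) *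
        (-(2 * a t * a' t) * ‖v - (a' t / a t) • x‖ ^ 2
          + (a t) ^ 2 * (2 * ((A'' * a t - a' t * a' t) / (a t) ^ 2)
              * ∑ j, x j * (v j - (a' t / a t) * x j)))) t := by
  set c : ℝ := a' t / a t with hc
  set c' : ℝ := (A'' * a t - a' t * a' t) / (a t) ^ 2 with hc'
  have hq : HasDerivAt (fun s => a' s / a s) c' t := hA'.div hA h0
  have hj : ∀ j : Fin 3, HasDerivAt (fun s => v j - (a' s / a s) * x j) (-(c' * x j)) t :=
    fun j => (hq.mul_const (x j)).const_sub (v j)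
  have hS : HasDerivAt (fun s => ∑ j : Fin 3, (v j - (a' s / a s) * x j) ^ 2)
      (∑ j : Fin 3, (2 * (v j - c * x j) ^ 1 * (-(c' * x j)))) t :=
    HasDerivAt.fun_sum (fun j _ => (hj j).pow 2)
  have h := ((((hA.fun_pow 2).fun_neg).fun_mul hS).exp).const_mul K
  have hfg : (fun s => K * Real.exp (-(a s) ^ 2 * ‖v - (a' s / a s) • x‖ ^ 2))
      = (fun s => K * Real.exp (-(a s) ^ 2 * ∑ j : Fin 3, (v j - (a' s / a s) * x j) ^ 2)) := by
    funext s; rw [normsub]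
  rw [hfg]
  refine h.congr_deriv ?_
  rw [normsub]
  rw [show (∑ j : Fin 3, (2 * (v j - c * x j) ^ 1 * (-(c' * x j))))
      = (-2 * c') * ∑ j : Fin 3, x j * (v j - c * x j) from by
    rw [Finset.mul_sum]; exact Finset.sum_congr rfl fun j _ => by ring]
  ring

/-- For a C² solution `a` of the scale-factor equation
`ä + (4π/3)a⁻² = 0`, the triple
`F(t,x,v) = π^{−3/2} exp(−a(t)²|v − (ȧ/a)x|²)`, `ρ(t,x) = a(t)⁻³`,
`φ(t,x) = (2π/3) a(t)⁻³ |x|²` is an exact solution of the Vlasov–Poisson–Boltzmann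
system: (i) `∫ F dv = ρ`; (ii) `Δₓφ = 4πρ`; (iii) the collision integrand and the
collision integral vanish; (iv) the Vlasov equation `∂ₜF + v·∇ₓF − ∇ₓφ·∇_vF = 0` holds. -/
theorem exact_VPB_solution
    (γ : ℝ) (hγ : γ ∈ Set.Ioo (-3 : ℝ) 0)
    (B : Sphere2 → ℝ) (C₀ : ℝ) (hC₀ : 0 < C₀) (hB : Measurable B)
    (hBbd : ∀ ω, 0 ≤ B ω ∧ B ω ≤ C₀)
    (a a' a'' : ℝ → ℝ)
    (hpos : ∀ t ∈ Ici (0 : ℝ), 0 < a t)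
    (ha : ∀ t ∈ Ici (0 : ℝ), HasDerivAt a (a' t) t)
    (ha' : ∀ t ∈ Ici (0 : ℝ), HasDerivAt a' (a'' t) t)
    (ha'' : ContinuousOn a'' (Ici 0))
    (hODE : ∀ t ∈ Ici (0 : ℝ), a'' t + (4 * π / 3) * (a t) ^ (-2 : ℤ) = 0)
    (F : ℝ → R3 → R3 → ℝ)
    (hF : F = fun t x v =>
      π ^ (-(3 : ℝ) / 2) * Real.exp (-(a t) ^ 2 * ‖v - (a' t / a t) • x‖ ^ 2))
    (ρ : ℝ → R3 → ℝ) (hρ : ρ = fun t _ => (a t) ^ (-3 : ℤ))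
    (φ : ℝ → R3 → ℝ) (hφ : φ = fun t x => (2 * π / 3) * (a t) ^ (-3 : ℤ) * ‖x‖ ^ 2) :
    ∀ t ∈ Ici (0 : ℝ), ∀ x : R3,
      -- (i) the velocity integral of F is ρ
      (∫ v : R3, F t x v) = ρ t x ∧
      -- (ii) Poisson's equation Δₓφ = 4πρ
      (∑ i : Fin 3, pd i (pd i (φ t)) x) = 4 * π * ρ t x ∧
      -- (iii) pointwise collision invariance and vanishing of the collision integral
      (∀ u v : R3, ∀ ω : Sphere2,
        F t x (uPost u v ω) * F t x (vPost u v ω) = F t x u * F t x v) ∧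
      (∀ v : R3,
        (∫ u : R3, ∫ ω : Sphere2, ‖u - v‖ ^ γ * B ω *
          (F t x (uPost u v ω) * F t x (vPost u v ω) - F t x u * F t x v)
            ∂sphMeasure) = 0) ∧
      -- (iv) the Vlasov equation
      (∀ v : R3,
        deriv (fun s => F s x v) t
          + (∑ i : Fin 3, v i * pd i (fun y => F t y v) x)
          - (∑ i : Fin 3, pd i (φ t) x * pd i (F t x) v) = 0) := by
  intro t ht x
  have hAt : 0 < a t := hpos t ht
  have h0 : a t ≠ 0 := hAt.ne'
  -- (iii) pointwise
  have hpoint : ∀ u v : R3, ∀ ω : Sphere2,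
      F t x (uPost u v ω) * F t x (vPost u v ω) = F t x u * F t x v := by
    intro u v ω
    have hω : ‖(ω : R3)‖ = 1 := by
      have := ω.2
      rwa [mem_sphere_zero_iff_norm] at this
    have hcol := collision_id u v ((a' t / a t) • x) (ω : R3) hω
    simp only [hF, uPost, vPost]
    have key : ∀ α β : ℝ, π ^ (-(3 : ℝ) / 2) * Real.exp α * (π ^ (-(3 : ℝ) / 2) * Real.exp β)
        = π ^ (-(3 : ℝ) / 2) * π ^ (-(3 : ℝ) / 2) * Real.exp (α + β) := fun α β => by
      rw [Real.exp_add]; ring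
    rw [key, key]
    congr 1
    congr 1
    linear_combination (-(a t) ^ 2) * hcol
  refine ⟨?_, ?_, hpoint, ?_, ?_⟩
  · -- (i)
    simp only [hF, hρ]
    rw [MeasureTheory.integral_const_mul]
    rw [MeasureTheory.integral_sub_right_eq_self
      (fun v : R3 => Real.exp (-(a t) ^ 2 * ‖v‖ ^ 2)) ((a' t / a t) • x)]
    rw [GaussianFourier.integral_rexp_neg_mul_sq_norm (show (0:ℝ) < (a t) ^ 2 by positivity)]
    have hrank : (Module.finrank ℝ R3 : ℝ) / 2 = (3 : ℝ) / 2 := by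
      norm_num [finrank_euclideanSpace_fin]
    rw [hrank]
    rw [Real.div_rpow pi_nonneg (sq_nonneg _)]
    have h1 : ((a t) ^ 2 : ℝ) ^ ((3:ℝ)/2) = (a t) ^ 3 := by
      rw [← Real.rpow_natCast (a t) 2, ← Real.rpow_mul hAt.le,
        show (((2:ℕ):ℝ) * (3/2)) = ((3:ℕ):ℝ) by norm_num, Real.rpow_natCast]
    rw [h1]
    rw [show (-(3:ℝ)/2) = -((3:ℝ)/2) by norm_num, Real.rpow_neg pi_nonneg]
    rw [show ((a t) ^ (-3:ℤ) : ℝ) = ((a t)^3)⁻¹ by rw [zpow_neg]; norm_cast]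
    have hπ : (π : ℝ) ^ ((3:ℝ)/2) ≠ 0 := by positivity
    field_simp
  · -- (ii)
    simp only [hφ, hρ]
    have hin : ∀ i : Fin 3, pd i (fun y : R3 => 2 * π / 3 * (a t) ^ (-3:ℤ) * ‖y‖ ^ 2)
        = fun y : R3 => (2 * π / 3 * (a t) ^ (-3:ℤ)) * (2 * y i) := by
      intro i; funext y; exact pd_phi (2 * π / 3 * (a t) ^ (-3:ℤ)) y i
    calc (∑ i : Fin 3, pd i (pd i (fun y : R3 => 2 * π / 3 * (a t) ^ (-3:ℤ) * ‖y‖ ^ 2)) x)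
        = ∑ i : Fin 3, (2 * π / 3 * (a t) ^ (-3:ℤ)) * 2 := by
          refine Finset.sum_congr rfl fun i _ => ?_
          rw [hin i, pd_lin (2 * π / 3 * (a t) ^ (-3:ℤ)) x i]
      _ = 4 * π * (a t) ^ (-3:ℤ) := by
          rw [Finset.sum_const]
          simp only [Finset.card_univ, Fintype.card_fin, nsmul_eq_mul]
          ring
  · -- (iii) integral
    intro v
    simp only [hpoint, sub_self, mul_zero, integral_zero]
  · -- (iv)
    intro v
    have htd := time_deriv (π ^ (-(3 : ℝ) / 2)) a a' t (a'' t) (ha t ht) (ha' t ht) h0 x v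
    simp only [hF, hφ]
    rw [htd.deriv]
    have hs1 : (∑ i : Fin 3, v i * pd i (fun y => π ^ (-(3 : ℝ) / 2) *
          Real.exp (-(a t) ^ 2 * ‖v - (a' t / a t) • y‖ ^ 2)) x)
        = ∑ i : Fin 3, v i * (π ^ (-(3 : ℝ) / 2) *
            Real.exp (-(a t) ^ 2 * ‖v - (a' t / a t) • x‖ ^ 2) * (-(a t) ^ 2) *
            (2 * (v i - (a' t / a t) * x i) * (-(a' t / a t)))) :=
      Finset.sum_congr rfl fun i _ => by
        rw [pd_gauss (π ^ (-(3 : ℝ) / 2)) ((a t) ^ 2) (a' t / a t) v x i]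
    have hs2 : (∑ i : Fin 3, pd i (fun y : R3 => 2 * π / 3 * (a t) ^ (-3:ℤ) * ‖y‖ ^ 2) x *
          pd i (fun w => π ^ (-(3 : ℝ) / 2) *
            Real.exp (-(a t) ^ 2 * ‖w - (a' t / a t) • x‖ ^ 2)) v)
        = ∑ i : Fin 3, (2 * π / 3 * (a t) ^ (-3:ℤ) * (2 * x i)) *
            (π ^ (-(3 : ℝ) / 2) * Real.exp (-(a t) ^ 2 * ‖v - (a' t / a t) • x‖ ^ 2) *
              (-(a t) ^ 2) * (2 * (v i - ((a' t / a t) • x) i))) :=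
      Finset.sum_congr rfl fun i _ => by
        rw [pd_phi (2 * π / 3 * (a t) ^ (-3:ℤ)) x i,
          pd_gauss' (π ^ (-(3 : ℝ) / 2)) ((a t) ^ 2) ((a' t / a t) • x) v i]
    rw [hs1, hs2]
    simp only [PiLp.smul_apply, smul_eq_mul]
    have h1 : (∑ i : Fin 3, v i * (π ^ (-(3 : ℝ) / 2) *
          Real.exp (-(a t) ^ 2 * ‖v - (a' t / a t) • x‖ ^ 2) * (-(a t) ^ 2) *
          (2 * (v i - (a' t / a t) * x i) * (-(a' t / a t)))))
        = (π ^ (-(3 : ℝ) / 2) * Real.exp (-(a t) ^ 2 * ‖v - (a' t / a t) • x‖ ^ 2) *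
            (-(a t) ^ 2) * (-(a' t / a t)) * 2) *
          ∑ i : Fin 3, v i * (v i - (a' t / a t) * x i) := by
      rw [Finset.mul_sum]; exact Finset.sum_congr rfl fun i _ => by ring
    have h2 : (∑ i : Fin 3, (2 * π / 3 * (a t) ^ (-3:ℤ) * (2 * x i)) *
          (π ^ (-(3 : ℝ) / 2) * Real.exp (-(a t) ^ 2 * ‖v - (a' t / a t) • x‖ ^ 2) *
            (-(a t) ^ 2) * (2 * (v i - (a' t / a t) * x i))))
        = (2 * π / 3 * (a t) ^ (-3:ℤ) * (π ^ (-(3 : ℝ) / 2) *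
            Real.exp (-(a t) ^ 2 * ‖v - (a' t / a t) • x‖ ^ 2) * (-(a t) ^ 2)) * 4) *
          ∑ i : Fin 3, x i * (v i - (a' t / a t) * x i) := by
      rw [Finset.mul_sum]; exact Finset.sum_congr rfl fun i _ => by ring
    have hU : (∑ i : Fin 3, v i * (v i - (a' t / a t) * x i))
        = ‖v - (a' t / a t) • x‖ ^ 2
          + (a' t / a t) * ∑ i : Fin 3, x i * (v i - (a' t / a t) * x i) := by
      rw [normsub v x (a' t / a t), Finset.mul_sum, ← Finset.sum_add_distrib]
      exact Finset.sum_congr rfl fun i _ => by ring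
    rw [h1, h2, hU]
    have hz3 : ((a t) : ℝ) ^ (-3:ℤ) = ((a t) ^ 3)⁻¹ := by
      rw [zpow_neg]; norm_cast
    have hA'' : a'' t = -(4 * π / 3) * ((a t) ^ 2)⁻¹ := by
      have hh := hODE t ht
      rw [show ((a t) : ℝ) ^ (-2:ℤ) = ((a t) ^ 2)⁻¹ by rw [zpow_neg]; norm_cast] at hh
      linarith
    rw [hz3, hA'']
    field_simp
    ring
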